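/- Let α > 1 be real. Define the generalised Laguerre polynomials L_n^{(α)}(x) = Σ_{k=0}^{n} (−1)^k · Γ(n+α+1) / (Γ(k+α+1) (n−k)! k!) · x^k, and the Laguerre W-system functions φₙ(x) = √(n!/Γ(n+1+α)) · x^{α/2} e^{−x/2} L_n^{(α)}(x) for x > 0, n ∈ ℤ₊. Set 𝔞_m = √(m!/Γ(m+1+α)) and 𝔟_n = √(Γ(n+1+α)/n!). Then for all m, n ∈ ℤ₊ the integral D_{m,n} = ∫_0^∞ φₘ′(x) φₙ(x) dx converges and D_{m,n} = −(1/2) 𝔞_m 𝔟_n if m ≥ n+1, D_{m,n} = 0 if m = n, and D_{m,n} = (1/2) 𝔞_n 𝔟_m if m ≤ n−1. -/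

import Mathlib

open MeasureTheory

/-- The generalised Laguerre polynomial
`L_n^{(α)}(x) = Σ_{k=0}^{n} (−1)^k Γ(n+α+1)/(Γ(k+α+1)(n−k)!k!) x^k` (as a function). -/
noncomputable def genLaguerre (α : ℝ) (n : ℕ) (x : ℝ) : ℝ :=
  ∑ k ∈ Finset.range (n + 1),
    (-1 : ℝ) ^ k * Real.Gamma ((n : ℝ) + α + 1) /
      (Real.Gamma ((k : ℝ) + α + 1) * (n - k).factorial * k.factorial) * x ^ k

/-- The Laguerre W-system function `φₙ(x) = √(n!/Γ(n+1+α)) x^{α/2} e^{−x/2} L_n^{(α)}(x)`. -/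
noncomputable def laguerreW (α : ℝ) (n : ℕ) (x : ℝ) : ℝ :=
  Real.sqrt ((n.factorial : ℝ) / Real.Gamma ((n : ℝ) + 1 + α)) *
    Real.rpow x (α / 2) * Real.exp (-x / 2) * genLaguerre α n x

open Finset


lemma alt_sum_succ (n : ℕ) (f : ℕ → ℝ) :
    ∑ k ∈ range (n + 2), (-1 : ℝ) ^ k * ((n+1).choose k) * f k
      = ∑ k ∈ range (n + 1), (-1 : ℝ) ^ k * (n.choose k) * (f k - f (k+1)) := by
  have h1 : ∑ k ∈ range (n + 2), (-1 : ℝ) ^ k * ((n+1).choose k) * f k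
      = (∑ i ∈ range (n+1), (-1 : ℝ) ^ (i+1) * ((n+1).choose (i+1)) * f (i+1)) + f 0 := by
    rw [Finset.sum_range_succ' (fun k => (-1 : ℝ) ^ k * ((n+1).choose k) * f k)]
    simp
  rw [h1]
  have h2 : ∀ i ∈ range (n+1), (-1 : ℝ) ^ (i+1) * ((n+1).choose (i+1)) * f (i+1)
      = -((-1 : ℝ) ^ i * (n.choose i) * f (i+1))
        + (-1 : ℝ) ^ (i+1) * (n.choose (i+1)) * f (i+1) := by
    intro i _
    rw [Nat.choose_succ_succ]
    push_cast
    ring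
  rw [Finset.sum_congr rfl h2, Finset.sum_add_distrib]
  have h3 : ∑ i ∈ range (n+1), (-1 : ℝ) ^ (i+1) * (n.choose (i+1)) * f (i+1)
      = ∑ j ∈ range (n+2), (-1 : ℝ) ^ j * (n.choose j) * f j - f 0 := by
    rw [Finset.sum_range_succ' (fun j => (-1 : ℝ) ^ j * (n.choose j) * f j)]
    simp
  have h4 : ∑ j ∈ range (n+2), (-1 : ℝ) ^ j * (n.choose j) * f j
      = ∑ j ∈ range (n+1), (-1 : ℝ) ^ j * (n.choose j) * f j := by
    rw [Finset.sum_range_succ]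
    simp [Nat.choose_succ_self]
  rw [h3, h4]
  simp only [mul_sub]
  rw [Finset.sum_sub_distrib, Finset.sum_neg_distrib]
  ring

lemma alt_sum_choose (n : ℕ) (hn : n ≠ 0) :
    ∑ k ∈ range (n + 1), (-1 : ℝ) ^ k * (n.choose k) = 0 := by
  have := Int.alternating_sum_range_choose_of_ne hn
  have h2 : ((∑ i ∈ range (n + 1), ((-1) ^ i * ↑(n.choose i) : ℤ) : ℤ) : ℝ) = 0 := by
    rw [this]; norm_num
  push_cast at h2
  convert h2 using 2

/-- `U` identity: `∑ (-1)^l C(n,l) Γ(α+j+l+1)/Γ(α+l+1) = 0` for `j < n`. -/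
lemma U_lemma : ∀ (n j : ℕ) (α : ℝ), 0 < α → j < n →
    ∑ l ∈ range (n + 1), (-1 : ℝ) ^ l * (n.choose l) *
      (Real.Gamma (α + j + l + 1) / Real.Gamma (α + l + 1)) = 0 := by
  intro n
  induction n with
  | zero => intro j α _ hj; omega
  | succ n ih =>
    intro j α hα hj
    rw [alt_sum_succ n (fun l => Real.Gamma (α + j + l + 1) / Real.Gamma (α + l + 1))]
    have key : ∀ l : ℕ, Real.Gamma (α + j + l + 1) / Real.Gamma (α + l + 1)
        - Real.Gamma (α + j + ((l+1 : ℕ) : ℝ) + 1) / Real.Gamma (α + ((l+1 : ℕ) : ℝ) + 1)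
        = -(j : ℝ) * (Real.Gamma ((α+1) + ((j:ℝ)-1) + l + 1) / Real.Gamma ((α+1) + l + 1)) := by
      intro l
      have hp1 : (0:ℝ) < α + l + 1 := by positivity
      have hp2 : (0:ℝ) < α + j + l + 1 := by positivity
      have e1 : Real.Gamma (α + j + ((l+1 : ℕ) : ℝ) + 1)
          = (α + j + l + 1) * Real.Gamma (α + j + l + 1) := by
        rw [show (α + j + ((l+1 : ℕ) : ℝ) + 1 : ℝ) = (α + j + l + 1) + 1 by push_cast; ring,
          Real.Gamma_add_one hp2.ne']
      have e2 : Real.Gamma (α + ((l+1 : ℕ) : ℝ) + 1) = (α + l + 1) * Real.Gamma (α + l + 1) := by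
        rw [show (α + ((l+1 : ℕ) : ℝ) + 1 : ℝ) = (α + l + 1) + 1 by push_cast; ring,
          Real.Gamma_add_one hp1.ne']
      have e3 : Real.Gamma ((α+1) + l + 1) = (α + l + 1) * Real.Gamma (α + l + 1) := by
        rw [show ((α+1) + (l:ℝ) + 1 : ℝ) = (α + l + 1) + 1 by ring, Real.Gamma_add_one hp1.ne']
      have e4 : ((α+1) + ((j:ℝ)-1) + l + 1 : ℝ) = α + j + l + 1 := by ring
      rw [e1, e2, e3, e4]
      have hG1 : Real.Gamma (α + l + 1) ≠ 0 := (Real.Gamma_pos_of_pos hp1).ne'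
      field_simp
      ring
    have hsum : ∑ l ∈ range (n + 1), (-1 : ℝ) ^ l * (n.choose l) *
          (Real.Gamma (α + j + l + 1) / Real.Gamma (α + l + 1)
            - Real.Gamma (α + j + ((l+1 : ℕ) : ℝ) + 1) / Real.Gamma (α + ((l+1 : ℕ) : ℝ) + 1))
        = -(j : ℝ) * ∑ l ∈ range (n + 1), (-1 : ℝ) ^ l * (n.choose l) *
          (Real.Gamma ((α+1) + ((j:ℝ)-1) + l + 1) / Real.Gamma ((α+1) + l + 1)) := by
      rw [Finset.mul_sum]
      exact Finset.sum_congr rfl fun l _ => by rw [key l]; ring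
    rw [hsum]
    rcases Nat.eq_zero_or_pos j with hj0 | hjpos
    · subst hj0; simp
    · obtain ⟨j', rfl⟩ : ∃ j', j = j' + 1 := ⟨j - 1, by omega⟩
      have h2 : ∑ l ∈ range (n + 1), (-1 : ℝ) ^ l * (n.choose l) *
            (Real.Gamma ((α+1) + (((j'+1 : ℕ):ℝ)-1) + l + 1) / Real.Gamma ((α+1) + l + 1))
          = ∑ l ∈ range (n + 1), (-1 : ℝ) ^ l * (n.choose l) *
            (Real.Gamma ((α+1) + (j' : ℝ) + l + 1) / Real.Gamma ((α+1) + l + 1)) := by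
        refine Finset.sum_congr rfl fun l _ => ?_
        rw [show ((α+1) + (((j'+1 : ℕ):ℝ)-1) + l + 1 : ℝ) = (α+1) + (j' : ℝ) + l + 1 by
          push_cast; ring]
      rw [h2, ih j' (α + 1) (by linarith) (by omega), mul_zero]

/-- `V` identity (generalized): alternating binomial sum of reciprocal Pochhammer products. -/
lemma V_lemma : ∀ (n j : ℕ) (α : ℝ), 0 < α →
    ∑ l ∈ range (n + 1), (-1 : ℝ) ^ l * (n.choose l) *
      (∏ i ∈ range (j + 1), (α + l + i)⁻¹)
    = ((n+j).factorial : ℝ) / (j.factorial : ℝ) * (∏ i ∈ range (n + j + 1), (α + i))⁻¹ := by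
  intro n
  induction n with
  | zero =>
    intro j α hα
    simp only [Finset.sum_range_one, Nat.cast_zero, Nat.choose_self, Nat.cast_one, pow_zero,
      zero_add, add_zero, one_mul]
    rw [div_self (by positivity), one_mul, ← Finset.prod_inv_distrib]
  | succ n ih =>
    intro j α hα
    rw [alt_sum_succ n (fun l => ∏ i ∈ range (j + 1), (α + l + i)⁻¹)]
    have key : ∀ l : ℕ, (∏ i ∈ range (j + 1), (α + l + i)⁻¹)
        - (∏ i ∈ range (j + 1), (α + ((l+1:ℕ):ℝ) + i)⁻¹)
        = ((j:ℝ) + 1) * ∏ i ∈ range (j + 2), (α + l + i)⁻¹ := by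
      intro l
      set P := ∏ i ∈ range j, (α + ((l+1:ℕ):ℝ) + i)⁻¹ with hP
      have hshift : ∀ k ∈ range j, (α + (l:ℝ) + ((k+1:ℕ):ℝ))⁻¹ = (α + ((l+1:ℕ):ℝ) + k)⁻¹ := by
        intro k _; congr 1; push_cast; ring
      have hA : (∏ i ∈ range (j+1), (α + (l:ℝ) + i)⁻¹) = (α + l)⁻¹ * P := by
        rw [Finset.prod_range_succ' (fun i => (α + (l:ℝ) + i)⁻¹) j, mul_comm, hP]
        congr 1
        · push_cast; ring_nf
        · exact Finset.prod_congr rfl hshift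
      have hB : (∏ i ∈ range (j+1), (α + ((l+1:ℕ):ℝ) + i)⁻¹) = P * (α + l + j + 1)⁻¹ := by
        rw [Finset.prod_range_succ, hP]
        congr 2
        push_cast; ring
      have hC : (∏ i ∈ range (j+2), (α + (l:ℝ) + i)⁻¹)
          = (α + l)⁻¹ * P * (α + l + j + 1)⁻¹ := by
        rw [Finset.prod_range_succ, Finset.prod_range_succ' (fun i => (α + (l:ℝ) + i)⁻¹) j]
        rw [Finset.prod_congr rfl hshift]
        have h0 : (α + (l:ℝ) + ((0:ℕ):ℝ))⁻¹ = (α + l)⁻¹ := by norm_num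
        have hj1 : (α + (l:ℝ) + ((j+1:ℕ):ℝ))⁻¹ = (α + l + j + 1)⁻¹ := by
          congr 1; push_cast; ring
        rw [h0, hj1, hP]
        ring
      rw [hA, hB, hC]
      have h1 : α + (l:ℝ) ≠ 0 := by positivity
      have h2 : α + (l:ℝ) + j + 1 ≠ 0 := by positivity
      field_simp
      ring
    have hsum : ∑ l ∈ range (n + 1), (-1 : ℝ) ^ l * (n.choose l) *
          ((∏ i ∈ range (j + 1), (α + l + i)⁻¹)
            - (∏ i ∈ range (j + 1), (α + ((l+1:ℕ):ℝ) + i)⁻¹))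
        = ((j:ℝ) + 1) * ∑ l ∈ range (n + 1), (-1 : ℝ) ^ l * (n.choose l) *
          (∏ i ∈ range (j + 1 + 1), (α + l + i)⁻¹) := by
      rw [Finset.mul_sum]
      exact Finset.sum_congr rfl fun l _ => by rw [key l]; ring
    rw [hsum, ih (j+1) α hα]
    have hidx : n + (j+1) + 1 = n + 1 + j + 1 := by omega
    have hidx2 : n + (j+1) = n + 1 + j := by omega
    rw [hidx, hidx2, Nat.factorial_succ j]
    have hjf : (j.factorial : ℝ) ≠ 0 := by positivity
    push_cast
    field_simp

/-- Coefficients of the generalised Laguerre polynomial. -/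
noncomputable def lagC (α : ℝ) (n k : ℕ) : ℝ :=
  (-1 : ℝ) ^ k * Real.Gamma ((n : ℝ) + α + 1) /
    (Real.Gamma ((k : ℝ) + α + 1) * (n - k).factorial * k.factorial)

lemma Gamma_prod (α : ℝ) (hα : 0 < α) (n : ℕ) :
    Real.Gamma (α + n) = Real.Gamma α * ∏ i ∈ range n, (α + i) := by
  induction n with
  | zero => simp
  | succ n ih =>
    have h : (α + ((n+1:ℕ):ℝ)) = (α + n) + 1 := by push_cast; ring
    rw [h, Real.Gamma_add_one (by positivity), ih, Finset.prod_range_succ]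
    ring

lemma lagC_eq (α : ℝ) (hα : 0 < α) (n k : ℕ) (hk : k ≤ n) :
    lagC α n k = (-1 : ℝ) ^ k * (n.choose k) * Real.Gamma ((n : ℝ) + α + 1) /
      ((n.factorial : ℝ) * Real.Gamma ((k : ℝ) + α + 1)) := by
  unfold lagC
  have h := Nat.choose_mul_factorial_mul_factorial hk
  have h2 : ((n.choose k : ℝ)) * (k.factorial : ℝ) * ((n-k).factorial : ℝ)
      = (n.factorial : ℝ) := by exact_mod_cast congrArg Nat.cast h
  have hc : (0:ℝ) < (n.choose k : ℝ) := by
    exact_mod_cast Nat.choose_pos hk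
  have hf1 : (0:ℝ) < ((n-k).factorial : ℝ) := by exact_mod_cast Nat.factorial_pos _
  have hf2 : (0:ℝ) < (k.factorial : ℝ) := by exact_mod_cast Nat.factorial_pos _
  have hG : (0:ℝ) < Real.Gamma ((k : ℝ) + α + 1) := Real.Gamma_pos_of_pos (by positivity)
  rw [div_eq_div_iff (by positivity) (by positivity)]
  rw [show ((n.factorial : ℝ)) = ((n.choose k : ℝ)) * (k.factorial : ℝ) * ((n-k).factorial : ℝ)
    from h2.symm]
  ring

/-- `∫ x^{α-1} e^{-x} L_n dx`-analogue: `∑ lagC(n,l) Γ(α+l) = Γ(α)`. -/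
lemma P1 (α : ℝ) (hα : 0 < α) (n : ℕ) :
    ∑ l ∈ range (n + 1), lagC α n l * Real.Gamma (α + l) = Real.Gamma α := by
  have main : ∀ l ∈ range (n+1), lagC α n l * Real.Gamma (α + l)
      = (Real.Gamma ((n : ℝ) + α + 1) / (n.factorial : ℝ)) *
        ((-1 : ℝ) ^ l * (n.choose l) * (∏ i ∈ range (0 + 1), (α + (l:ℝ) + i)⁻¹)) := by
    intro l hl
    rw [lagC_eq α hα n l (by simpa using Nat.lt_succ_iff.mp (Finset.mem_range.mp hl))]
    have hGl : (0:ℝ) < Real.Gamma (α + l) := Real.Gamma_pos_of_pos (by positivity)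
    have he : Real.Gamma ((l : ℝ) + α + 1) = (α + l) * Real.Gamma (α + l) := by
      rw [show ((l : ℝ) + α + 1) = (α + l) + 1 by ring, Real.Gamma_add_one (by positivity)]
    rw [he, show (∏ i ∈ range (0+1), (α + (l:ℝ) + (i:ℝ))⁻¹) = (α + (l:ℝ))⁻¹ by simp]
    have h1 : (α + (l:ℝ)) ≠ 0 := by positivity
    have hnf : ((n.factorial : ℝ)) ≠ 0 := by positivity
    field_simp
  rw [Finset.sum_congr rfl main, ← Finset.mul_sum, V_lemma n 0 α hα]
  have hGn : Real.Gamma ((n : ℝ) + α + 1) = Real.Gamma α * ∏ i ∈ range (n + 0 + 1), (α + i) := by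
    rw [show ((n : ℝ) + α + 1) = α + ((n+1 : ℕ) : ℝ) by push_cast; ring,
      Gamma_prod α hα (n+1)]
    try norm_num
  rw [hGn]
  have hprod : (0:ℝ) < ∏ i ∈ range (n + 0 + 1), (α + (i:ℝ)) :=
    Finset.prod_pos fun i _ => by positivity
  have hnf : (0:ℝ) < (n.factorial : ℝ) := by exact_mod_cast Nat.factorial_pos n
  field_simp
  try ring

/-- Orthogonality-type vanishing: `∑ lagC(n,l) Γ(α+j+l+1) = 0` for `j < n`. -/
lemma P2 (α : ℝ) (hα : 0 < α) (n j : ℕ) (hj : j < n) :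
    ∑ l ∈ range (n + 1), lagC α n l * Real.Gamma (α + j + l + 1) = 0 := by
  have main : ∀ l ∈ range (n+1), lagC α n l * Real.Gamma (α + j + l + 1)
      = (Real.Gamma ((n : ℝ) + α + 1) / (n.factorial : ℝ)) *
        ((-1 : ℝ) ^ l * (n.choose l) * (Real.Gamma (α + j + l + 1) / Real.Gamma (α + l + 1))) := by
    intro l hl
    rw [lagC_eq α hα n l (by simpa using Nat.lt_succ_iff.mp (Finset.mem_range.mp hl))]
    rw [show ((l : ℝ) + α + 1) = α + l + 1 by ring]
    have h1 : (0:ℝ) < Real.Gamma (α + l + 1) := Real.Gamma_pos_of_pos (by positivity)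
    have hnf : ((n.factorial : ℝ)) ≠ 0 := by positivity
    field_simp
  rw [Finset.sum_congr rfl main, ← Finset.mul_sum, U_lemma n j α hα hj, mul_zero]

lemma coeff_shift (α : ℝ) (hα : 0 < α) (M j : ℕ) :
    ((j:ℝ) + 1) * lagC α (M+1) (j+1) = - lagC (α+1) M j := by
  unfold lagC
  rw [show ((M+1) - (j+1)) = M - j from by omega, Nat.factorial_succ j]
  rw [show (((M+1:ℕ):ℝ) + α + 1) = (M:ℝ) + (α+1) + 1 by push_cast; ring]
  rw [show (((j+1:ℕ):ℝ) + α + 1) = (j:ℝ) + (α+1) + 1 by push_cast; ring]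
  have hG : Real.Gamma ((j:ℝ) + (α+1) + 1) ≠ 0 :=
    (Real.Gamma_pos_of_pos (by positivity)).ne'
  have h1 : ((j:ℝ) + 1) ≠ 0 := by positivity
  have h2 : ((M-j).factorial : ℝ) ≠ 0 := by positivity
  have h3 : ((j.factorial : ℝ)) ≠ 0 := by positivity
  push_cast
  field_simp
  ring

/-- Derivative moment: `∑ k·lagC(m,k)·Γ(α+l+k)` vanishes for `1 ≤ l ≤ M`, is `-Γ(α+1)` at `l=0`. -/
lemma P3 (α : ℝ) (hα : 0 < α) (M l : ℕ) (hl : l ≤ M) :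
    ∑ k ∈ range (M + 2), (k : ℝ) * lagC α (M+1) k * Real.Gamma (α + l + k)
      = if l = 0 then -Real.Gamma (α + 1) else 0 := by
  rw [Finset.sum_range_succ' (fun k => (k : ℝ) * lagC α (M+1) k * Real.Gamma (α + l + k)) (M+1)]
  simp only [Nat.cast_zero, zero_mul, add_zero]
  have step : ∀ j ∈ range (M+1), ((j+1:ℕ) : ℝ) * lagC α (M+1) (j+1) * Real.Gamma (α + l + ((j+1:ℕ):ℝ))
      = -(lagC (α+1) M j * Real.Gamma (α + l + ((j+1:ℕ):ℝ))) := by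
    intro j _
    have := coeff_shift α hα M j
    rw [show (((j+1:ℕ):ℝ)) = (j:ℝ) + 1 by push_cast; ring, this]
    ring
  rw [Finset.sum_congr rfl step, Finset.sum_neg_distrib]
  rcases Nat.eq_zero_or_pos l with rfl | hlpos
  · simp only [if_pos rfl]
    have harg : ∀ j ∈ range (M+1), lagC (α+1) M j * Real.Gamma (α + (0:ℕ) + ((j+1:ℕ):ℝ))
        = lagC (α+1) M j * Real.Gamma ((α+1) + j) := by
      intro j _
      rw [show (α + ((0:ℕ):ℝ) + ((j+1:ℕ):ℝ)) = (α+1) + (j:ℝ) by push_cast; ring]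
    rw [Finset.sum_congr rfl harg, P1 (α+1) (by positivity) M]
    simp
  · obtain ⟨l', rfl⟩ : ∃ l', l = l' + 1 := ⟨l - 1, by omega⟩
    rw [if_neg (by omega)]
    have harg : ∀ j ∈ range (M+1), lagC (α+1) M j * Real.Gamma (α + ((l'+1:ℕ):ℝ) + ((j+1:ℕ):ℝ))
        = lagC (α+1) M j * Real.Gamma ((α+1) + l' + j + 1) := by
      intro j _
      rw [show (α + ((l'+1:ℕ):ℝ) + ((j+1:ℕ):ℝ)) = (α+1) + (l':ℝ) + j + 1 by push_cast; ring]
    rw [Finset.sum_congr rfl harg, P2 (α+1) (by positivity) M l' (by omega), neg_zero]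

/-- The central antisymmetric double sum. -/
noncomputable def Tsum (α : ℝ) (m n : ℕ) : ℝ :=
  ∑ k ∈ range (m+1), ∑ l ∈ range (n+1),
    lagC α m k * lagC α n l * ((k:ℝ) - l) * Real.Gamma (α + k + l)

lemma Tsum_antisymm (α : ℝ) (m n : ℕ) : Tsum α m n = - Tsum α n m := by
  unfold Tsum
  rw [Finset.sum_comm]
  have : ∀ l ∈ range (n+1), ∀ k ∈ range (m+1),
      lagC α m k * lagC α n l * ((k:ℝ) - l) * Real.Gamma (α + k + l)
      = -(lagC α n l * lagC α m k * ((l:ℝ) - k) * Real.Gamma (α + l + k)) := by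
    intro l _ k _
    rw [show (α + (l:ℝ) + k) = α + (k:ℝ) + l by ring]
    ring
  rw [Finset.sum_congr rfl fun l hl => Finset.sum_congr rfl (this l hl)]
  simp [Finset.sum_neg_distrib]

lemma Tsum_eq_of_lt (α : ℝ) (hα : 0 < α) {m n : ℕ} (h : n < m) :
    Tsum α m n = -(Real.Gamma ((n:ℝ) + α + 1) / (n.factorial : ℝ)) := by
  obtain ⟨M, rfl⟩ : ∃ M, m = M + 1 := ⟨m - 1, by omega⟩
  have split : Tsum α (M+1) n
      = (∑ l ∈ range (n+1), lagC α n l *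
          ∑ k ∈ range (M+2), (k:ℝ) * lagC α (M+1) k * Real.Gamma (α + l + k))
        - (∑ l ∈ range (n+1), ((l:ℝ) * lagC α n l) *
          ∑ k ∈ range (M+2), lagC α (M+1) k * Real.Gamma (α + l + k)) := by
    unfold Tsum
    rw [Finset.sum_comm, ← Finset.sum_sub_distrib]
    refine Finset.sum_congr rfl fun l _ => ?_
    rw [Finset.mul_sum, Finset.mul_sum, ← Finset.sum_sub_distrib]
    refine Finset.sum_congr rfl fun k _ => ?_
    rw [show (α + (k:ℝ) + l) = α + (l:ℝ) + k by ring]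
    ring
  rw [split]
  have t1 : ∀ l ∈ range (n+1), lagC α n l *
        ∑ k ∈ range (M+2), (k:ℝ) * lagC α (M+1) k * Real.Gamma (α + l + k)
      = lagC α n l * (if l = 0 then -Real.Gamma (α+1) else 0) := by
    intro l hl
    rw [P3 α hα M l (by have := Finset.mem_range.mp hl; omega)]
  rw [Finset.sum_congr rfl t1]
  have t1' : ∑ l ∈ range (n+1), lagC α n l * (if l = 0 then -Real.Gamma (α+1) else 0)
      = lagC α n 0 * (-Real.Gamma (α+1)) := by
    rw [Finset.sum_eq_single_of_mem 0 (Finset.mem_range.mpr (by omega))]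
    · simp
    · intro b _ hb; simp [hb]
  rw [t1']
  have t2 : ∀ l ∈ range (n+1), ((l:ℝ) * lagC α n l) *
        ∑ k ∈ range (M+2), lagC α (M+1) k * Real.Gamma (α + l + k) =
      (if l = 0 then (0:ℝ) else 0) := by
    intro l hl
    rcases Nat.eq_zero_or_pos l with rfl | hlpos
    · simp
    · obtain ⟨l', rfl⟩ : ∃ l', l = l' + 1 := ⟨l - 1, by omega⟩
      have inner : ∑ k ∈ range (M+2), lagC α (M+1) k * Real.Gamma (α + ((l'+1:ℕ):ℝ) + k)
          = 0 := by
        have harg : ∀ k ∈ range (M+2), lagC α (M+1) k * Real.Gamma (α + ((l'+1:ℕ):ℝ) + k)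
            = lagC α (M+1) k * Real.Gamma (α + l' + k + 1) := by
          intro k _
          rw [show (α + ((l'+1:ℕ):ℝ) + (k:ℝ)) = α + (l':ℝ) + k + 1 by push_cast; ring]
        rw [Finset.sum_congr rfl harg]
        exact P2 α hα (M+1) l' (by have := Finset.mem_range.mp hl; omega)
      rw [inner, mul_zero, if_neg (by omega)]
  rw [Finset.sum_congr rfl t2]
  simp only [ite_self, Finset.sum_const_zero, sub_zero]
  have hl0 : lagC α n 0 = Real.Gamma ((n:ℝ) + α + 1) / (Real.Gamma (α + 1) * (n.factorial : ℝ)) := by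
    unfold lagC
    rw [show ((0:ℕ):ℝ) + α + 1 = α + 1 by push_cast; ring]
    norm_num
  rw [hl0]
  have hG : Real.Gamma (α+1) ≠ 0 := (Real.Gamma_pos_of_pos (by positivity)).ne'
  have hnf : ((n.factorial : ℝ)) ≠ 0 := by positivity
  field_simp

lemma genLaguerre_eq (α : ℝ) (n : ℕ) (x : ℝ) :
    genLaguerre α n x = ∑ k ∈ Finset.range (n + 1), lagC α n k * x ^ k := rfl

lemma hasDerivAt_genLaguerre (α : ℝ) (n : ℕ) (x : ℝ) :
    HasDerivAt (genLaguerre α n)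
      (∑ k ∈ Finset.range (n + 1), lagC α n k * ((k : ℝ) * x ^ (k - 1))) x := by
  have h : ∀ k ∈ Finset.range (n+1),
      HasDerivAt (fun y : ℝ => lagC α n k * y ^ k) (lagC α n k * ((k : ℝ) * x ^ (k - 1))) x :=
    fun k _ => (hasDerivAt_pow k x).const_mul _
  exact HasDerivAt.fun_sum h

lemma hasDerivAt_laguerreW (α : ℝ) (n : ℕ) {x : ℝ} (hx : 0 < x) :
    HasDerivAt (laguerreW α n)
      ((Real.sqrt ((n.factorial : ℝ) / Real.Gamma ((n : ℝ) + 1 + α)) * ((α/2) * x ^ (α/2 - 1))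
          * Real.exp (-x/2)
        + Real.sqrt ((n.factorial : ℝ) / Real.Gamma ((n : ℝ) + 1 + α)) * x ^ (α/2)
          * (Real.exp (-x/2) * (-1/2))) * genLaguerre α n x
      + Real.sqrt ((n.factorial : ℝ) / Real.Gamma ((n : ℝ) + 1 + α)) * x ^ (α/2)
          * Real.exp (-x/2)
        * (∑ k ∈ Finset.range (n + 1), lagC α n k * ((k : ℝ) * x ^ (k - 1)))) x := by
  have h1 : HasDerivAt (fun y : ℝ => y ^ (α/2)) ((α/2) * x ^ (α/2 - 1)) x :=
    Real.hasDerivAt_rpow_const (Or.inl hx.ne')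
  have h2 : HasDerivAt (fun y : ℝ => Real.exp (-y/2)) (Real.exp (-x/2) * (-1/2)) x := by
    have hlin : HasDerivAt (fun y : ℝ => -y/2) (-1/2) x := by
      simpa using ((hasDerivAt_id x).neg.div_const 2)
    exact hlin.exp
  have h3 := hasDerivAt_genLaguerre α n x
  have h0 := h1.const_mul (Real.sqrt ((n.factorial : ℝ) / Real.Gamma ((n : ℝ) + 1 + α)))
  have hp := h0.mul h2
  have hw := hp.mul h3
  exact hw

lemma exp_half_sq (x : ℝ) : Real.exp (-x/2) * Real.exp (-x/2) = Real.exp (-x) := by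
  rw [← Real.exp_add]; ring_nf

/-- The key pointwise expansion of the integrand into Gamma-integrand basis functions. -/
lemma integrand_eq (α : ℝ) (m n : ℕ) {x : ℝ} (hx : 0 < x) :
    deriv (laguerreW α m) x * laguerreW α n x
      = ∑ k ∈ Finset.range (m + 1), ∑ l ∈ Finset.range (n + 1),
          ((Real.sqrt ((m.factorial : ℝ) / Real.Gamma ((m : ℝ) + 1 + α)) *
              Real.sqrt ((n.factorial : ℝ) / Real.Gamma ((n : ℝ) + 1 + α)) *
              lagC α m k * lagC α n l * (α/2 + k)) * (Real.exp (-x) * x ^ (α + k + l - 1))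
          + (-(Real.sqrt ((m.factorial : ℝ) / Real.Gamma ((m : ℝ) + 1 + α)) *
              Real.sqrt ((n.factorial : ℝ) / Real.Gamma ((n : ℝ) + 1 + α)) *
              lagC α m k * lagC α n l) / 2) * (Real.exp (-x) * x ^ (α + k + l + 1 - 1))) := by
  set Am := Real.sqrt ((m.factorial : ℝ) / Real.Gamma ((m : ℝ) + 1 + α)) with hAm
  set An := Real.sqrt ((n.factorial : ℝ) / Real.Gamma ((n : ℝ) + 1 + α)) with hAn
  have hd := (hasDerivAt_laguerreW α m hx).deriv
  rw [hd]
  have hWn : laguerreW α n x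
      = ∑ l ∈ Finset.range (n+1), (An * x ^ (α/2) * Real.exp (-x/2)) * (lagC α n l * x ^ l) := by
    rw [show laguerreW α n x
        = (An * x ^ (α/2) * Real.exp (-x/2)) * genLaguerre α n x from rfl, genLaguerre_eq,
      Finset.mul_sum]
  rw [hWn, genLaguerre_eq]
  rw [show (Am * ((α/2) * x ^ (α/2 - 1)) * Real.exp (-x/2)
        + Am * x ^ (α/2) * (Real.exp (-x/2) * (-1/2))) *
        (∑ k ∈ Finset.range (m+1), lagC α m k * x ^ k)
      + Am * x ^ (α/2) * Real.exp (-x/2)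
        * (∑ k ∈ Finset.range (m+1), lagC α m k * ((k:ℝ) * x ^ (k-1)))
      = ∑ k ∈ Finset.range (m+1),
          ((Am * ((α/2) * x ^ (α/2 - 1)) * Real.exp (-x/2)
            + Am * x ^ (α/2) * (Real.exp (-x/2) * (-1/2))) * (lagC α m k * x ^ k)
          + Am * x ^ (α/2) * Real.exp (-x/2) * (lagC α m k * ((k:ℝ) * x ^ (k-1)))) by
    rw [Finset.mul_sum, Finset.mul_sum, ← Finset.sum_add_distrib]]
  rw [Finset.sum_mul]
  refine Finset.sum_congr rfl fun k hk => ?_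
  rw [Finset.mul_sum]
  refine Finset.sum_congr rfl fun l hl => ?_
  -- now pointwise in k, l
  have hEE := exp_half_sq x
  rcases Nat.eq_zero_or_pos k with rfl | hkpos
  · have h1 : x ^ (α + ((0:ℕ):ℝ) + l - 1)
        = x ^ (α/2 - 1) * x ^ (α/2) * x ^ l := by
      rw [← Real.rpow_natCast x l, ← Real.rpow_add hx, ← Real.rpow_add hx]
      congr 1; push_cast; ring
    have h2 : x ^ (α + ((0:ℕ):ℝ) + l + 1 - 1)
        = x ^ (α/2) * x ^ (α/2) * x ^ l := by
      rw [← Real.rpow_natCast x l, ← Real.rpow_add hx, ← Real.rpow_add hx]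
      congr 1; push_cast; ring
    rw [h1, h2, ← hEE]
    push_cast
    ring
  · obtain ⟨k', rfl⟩ : ∃ k', k = k' + 1 := ⟨k - 1, by omega⟩
    have hq : x ^ (α/2 - 1) * x = x ^ (α/2) := by
      nth_rewrite 2 [← Real.rpow_one x]
      rw [← Real.rpow_add hx]
      congr 1; ring
    have h1 : x ^ (α + ((k'+1:ℕ):ℝ) + l - 1)
        = x ^ (α/2) * x ^ (α/2) * (x ^ k' * x ^ l) := by
      rw [← Real.rpow_natCast x l, ← Real.rpow_natCast x k', ← Real.rpow_add hx,
        ← Real.rpow_add hx, ← Real.rpow_add hx]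
      congr 1; push_cast; ring
    have h2 : x ^ (α + ((k'+1:ℕ):ℝ) + l + 1 - 1)
        = x ^ (α/2) * x ^ (α/2) * (x ^ k' * x ^ l) * x := by
      rw [show α + ((k'+1:ℕ):ℝ) + l + 1 - 1 = (α + ((k'+1:ℕ):ℝ) + l - 1) + 1 by ring,
        Real.rpow_add_one hx.ne', h1]
    have hnp : x ^ (k' + 1) = x ^ k' * x := pow_succ x k'
    have hnp2 : x ^ ((k' + 1) - 1) = x ^ k' := by norm_num
    rw [h1, h2, hnp, hnp2, ← hEE, ← hq]
    push_cast
    ring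

lemma integral_main (α : ℝ) (hα : 1 < α) (m n : ℕ) :
    IntegrableOn (fun x => deriv (laguerreW α m) x * laguerreW α n x) (Set.Ioi 0) ∧
    ∫ x in Set.Ioi (0:ℝ), deriv (laguerreW α m) x * laguerreW α n x
      = (Real.sqrt ((m.factorial : ℝ) / Real.Gamma ((m : ℝ) + 1 + α)) *
          Real.sqrt ((n.factorial : ℝ) / Real.Gamma ((n : ℝ) + 1 + α)) / 2) * Tsum α m n := by
  have hα0 : (0:ℝ) < α := lt_trans one_pos hα
  set Am := Real.sqrt ((m.factorial : ℝ) / Real.Gamma ((m : ℝ) + 1 + α)) with hAm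
  set An := Real.sqrt ((n.factorial : ℝ) / Real.Gamma ((n : ℝ) + 1 + α)) with hAn
  set F : ℝ → ℝ := fun x => ∑ k ∈ Finset.range (m + 1), ∑ l ∈ Finset.range (n + 1),
      ((Am * An * lagC α m k * lagC α n l * (α/2 + k)) * (Real.exp (-x) * x ^ (α + k + l - 1))
      + (-(Am * An * lagC α m k * lagC α n l) / 2) *
          (Real.exp (-x) * x ^ (α + k + l + 1 - 1))) with hF
  have hpos1 : ∀ (k l : ℕ), (0:ℝ) < α + k + l := fun k l => by positivity
  have hpos2 : ∀ (k l : ℕ), (0:ℝ) < α + k + l + 1 := fun k l => by positivity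
  have hsummand : ∀ (k l : ℕ), IntegrableOn (fun x : ℝ =>
      (Am * An * lagC α m k * lagC α n l * (α/2 + k)) * (Real.exp (-x) * x ^ (α + k + l - 1))
      + (-(Am * An * lagC α m k * lagC α n l) / 2) *
          (Real.exp (-x) * x ^ (α + k + l + 1 - 1))) (Set.Ioi 0) := by
    intro k l
    exact ((Real.GammaIntegral_convergent (hpos1 k l)).const_mul _).add
      ((Real.GammaIntegral_convergent (hpos2 k l)).const_mul _)
  have hFint : IntegrableOn F (Set.Ioi 0) := by
    apply MeasureTheory.integrable_finset_sum
    intro k _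
    exact MeasureTheory.integrable_finset_sum _ (fun l _ => hsummand k l)
  have hEq : Set.EqOn (fun x => deriv (laguerreW α m) x * laguerreW α n x) F (Set.Ioi 0) :=
    fun x hx => integrand_eq α m n hx
  constructor
  · exact hFint.congr_fun hEq.symm measurableSet_Ioi
  · rw [MeasureTheory.setIntegral_congr_fun measurableSet_Ioi hEq]
    rw [hF]
    rw [MeasureTheory.integral_finset_sum _
      (fun k _ => MeasureTheory.integrable_finset_sum _ (fun l _ => hsummand k l))]
    have hstep : ∀ k ∈ Finset.range (m+1),
        ∫ x in Set.Ioi (0:ℝ), ∑ l ∈ Finset.range (n + 1),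
          ((Am * An * lagC α m k * lagC α n l * (α/2 + k)) * (Real.exp (-x) * x ^ (α + k + l - 1))
          + (-(Am * An * lagC α m k * lagC α n l) / 2) *
              (Real.exp (-x) * x ^ (α + k + l + 1 - 1)))
        = ∑ l ∈ Finset.range (n + 1),
          ((Am * An * lagC α m k * lagC α n l * (α/2 + k)) * Real.Gamma (α + k + l)
          + (-(Am * An * lagC α m k * lagC α n l) / 2) * Real.Gamma (α + k + l + 1)) := by
      intro k _
      rw [MeasureTheory.integral_finset_sum _ (fun l _ => hsummand k l)]
      refine Finset.sum_congr rfl fun l _ => ?_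
      rw [MeasureTheory.integral_add
        ((Real.GammaIntegral_convergent (hpos1 k l)).const_mul _)
        ((Real.GammaIntegral_convergent (hpos2 k l)).const_mul _)]
      rw [MeasureTheory.integral_const_mul, MeasureTheory.integral_const_mul]
      rw [← Real.Gamma_eq_integral (hpos1 k l), ← Real.Gamma_eq_integral (hpos2 k l)]
  -- now pure algebra
    rw [Finset.sum_congr rfl hstep]
    unfold Tsum
    rw [Finset.mul_sum]
    refine Finset.sum_congr rfl fun k _ => ?_
    rw [Finset.mul_sum]
    refine Finset.sum_congr rfl fun l _ => ?_
    rw [Real.Gamma_add_one (hpos1 k l).ne']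
    ring


lemma sqrt_flip {a b : ℝ} (ha : 0 < a) (hb : 0 < b) :
    Real.sqrt (a / b) * (b / a) = Real.sqrt (b / a) := by
  rw [← inv_div b a, Real.sqrt_inv]
  calc (Real.sqrt (b/a))⁻¹ * (b/a) = (b/a) / Real.sqrt (b/a) := by ring
    _ = Real.sqrt (b/a) := Real.div_sqrt

/-- for `α > 1`, the differentiation matrix `D_{m,n} = ∫_0^∞ φₘ′ φₙ` of the
Laguerre W-system is semiseparable of rank one:
`D_{m,n} = −(1/2)𝔞ₘ𝔟ₙ` for `m ≥ n+1`, `0` for `m = n`, `(1/2)𝔞ₙ𝔟ₘ` for `m ≤ n−1`,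
where `𝔞ₘ = √(m!/Γ(m+1+α))` and `𝔟ₙ = √(Γ(n+1+α)/n!)`; in particular all these
integrals converge. -/
theorem laguerreW_differentiationMatrix (α : ℝ) (hα : 1 < α) (m n : ℕ) :
    IntegrableOn (fun x => deriv (laguerreW α m) x * laguerreW α n x) (Set.Ioi 0) ∧
    (n + 1 ≤ m →
      ∫ x in Set.Ioi (0 : ℝ), deriv (laguerreW α m) x * laguerreW α n x
        = -(1 / 2) * Real.sqrt ((m.factorial : ℝ) / Real.Gamma ((m : ℝ) + 1 + α)) *
            Real.sqrt (Real.Gamma ((n : ℝ) + 1 + α) / (n.factorial : ℝ))) ∧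
    (m = n →
      ∫ x in Set.Ioi (0 : ℝ), deriv (laguerreW α m) x * laguerreW α n x = 0) ∧
    (m + 1 ≤ n →
      ∫ x in Set.Ioi (0 : ℝ), deriv (laguerreW α m) x * laguerreW α n x
        = (1 / 2) * Real.sqrt ((n.factorial : ℝ) / Real.Gamma ((n : ℝ) + 1 + α)) *
            Real.sqrt (Real.Gamma ((m : ℝ) + 1 + α) / (m.factorial : ℝ))) := by
  have hα0 : (0:ℝ) < α := lt_trans one_pos hα
  obtain ⟨hint, hval⟩ := integral_main α hα m n
  have hnf : (0:ℝ) < (n.factorial : ℝ) := by exact_mod_cast Nat.factorial_pos n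
  have hmf : (0:ℝ) < (m.factorial : ℝ) := by exact_mod_cast Nat.factorial_pos m
  have hGn : (0:ℝ) < Real.Gamma ((n:ℝ) + 1 + α) := Real.Gamma_pos_of_pos (by positivity)
  have hGm : (0:ℝ) < Real.Gamma ((m:ℝ) + 1 + α) := Real.Gamma_pos_of_pos (by positivity)
  refine ⟨hint, ?_, ?_, ?_⟩
  · intro h
    rw [hval, Tsum_eq_of_lt α hα0 (by omega : n < m)]
    rw [show (n:ℝ) + α + 1 = (n:ℝ) + 1 + α by ring]
    have hkey := sqrt_flip hnf hGn
    rw [show Real.sqrt (Real.Gamma ((n:ℝ) + 1 + α) / (n.factorial:ℝ))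
        = Real.sqrt ((n.factorial:ℝ) / Real.Gamma ((n:ℝ) + 1 + α)) *
          (Real.Gamma ((n:ℝ) + 1 + α) / (n.factorial:ℝ)) from hkey.symm]
    ring
  · intro h
    subst h
    have h0 : Tsum α m m = 0 := by
      have := Tsum_antisymm α m m
      linarith
    rw [hval, h0, mul_zero]
  · intro h
    rw [hval, Tsum_antisymm α m n, Tsum_eq_of_lt α hα0 (by omega : m < n)]
    rw [show (m:ℝ) + α + 1 = (m:ℝ) + 1 + α by ring]
    have hkey := sqrt_flip hmf hGm
    rw [show Real.sqrt (Real.Gamma ((m:ℝ) + 1 + α) / (m.factorial:ℝ))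
        = Real.sqrt ((m.factorial:ℝ) / Real.Gamma ((m:ℝ) + 1 + α)) *
          (Real.Gamma ((m:ℝ) + 1 + α) / (m.factorial:ℝ)) from hkey.symm]
    ring
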